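/- arXiv:0712.2418 — 2 statements merged into one kernel-verified Lean document; each statement's English description precedes it below -/
import Mathlib

section
/- Let a, b, d_1, ..., d_ℓ be indeterminates over ℚ, set d_0 = 1, d_n = 0 for n < 0 or n > ℓ, and define c_k by the power series identity ∑ c_k t^k = ((1-2at)(1-2bt)/((1-at)(1-bt))) · ∑_{i=0}^ℓ d_i t^i. Let e_1 = a+b, e_2 = ab, and let h_n be the complete homogeneous symmetric polynomial in a, b. Then for all integers α ≥ β ≥ γ with β ≥ ℓ+2 and γ ≤ ℓ: s(α,β,γ) = e_2^{β-ℓ-2} · h_{α-β} · s(ℓ+2,ℓ+2) · (d_γ - 2e_1 d_{γ-1} + 4 e_2 d_{γ-2}), where s(i,j,k) = det [[c_i,c_{i+1},c_{i+2}],[c_{j-1},c_j,c_{j+1}],[c_{k-2},c_{k-1},c_k]] and s(i,j) = det [[c_i,c_{i+1}],[c_{j-1},c_j]]. -/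
open PowerSeries Finset

/-- The ring `ℚ[a, b, d_1, …, d_ℓ]`. -/
abbrev R6 (ℓ : ℕ) := MvPolynomial (Sum (Fin 2) (Fin ℓ)) ℚ

noncomputable def va (ℓ : ℕ) : R6 ℓ := MvPolynomial.X (Sum.inl 0)
noncomputable def vb (ℓ : ℕ) : R6 ℓ := MvPolynomial.X (Sum.inl 1)

/-- `d 0 = 1`, `d i` is the variable `d_i` for `1 ≤ i ≤ ℓ`, and `d i = 0` otherwise. -/
noncomputable def dV (ℓ : ℕ) (i : ℤ) : R6 ℓ :=
  if i = 0 then 1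
  else if h : 1 ≤ i ∧ i ≤ (ℓ : ℤ) then
    MvPolynomial.X (Sum.inr ⟨(i - 1).toNat, by omega⟩) else 0

/-- Complete homogeneous symmetric polynomial `h_n` in `a`, `b`. -/
noncomputable def hh (ℓ : ℕ) (n : ℕ) : R6 ℓ :=
  ∑ i ∈ Finset.range (n + 1), va ℓ ^ i * vb ℓ ^ (n - i)

/-- The 3×3 Schur determinant `s(i,j,k)`. -/
noncomputable def s3 (ℓ : ℕ) (c : ℤ → R6 ℓ) (i j k : ℤ) : R6 ℓ :=
  Matrix.det !![c i, c (i+1), c (i+2); c (j-1), c j, c (j+1); c (k-2), c (k-1), c k]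

/-- The 2×2 Schur determinant `s(i,j)`. -/
noncomputable def s2 (ℓ : ℕ) (c : ℤ → R6 ℓ) (i j : ℤ) : R6 ℓ :=
  Matrix.det !![c i, c (i+1); c (j-1), c j]

/-! ### Auxiliary definitions and lemmas -/

lemma s3_expand (ℓ : ℕ) (c : ℤ → R6 ℓ) (i j k : ℤ) : s3 ℓ c i j k =
    c i * c j * c k - c i * c (j+1) * c (k-1) - c (i+1) * c (j-1) * c k
      + c (i+1) * c (j+1) * c (k-2) + c (i+2) * c (j-1) * c (k-1)
      - c (i+2) * c j * c (k-2) := by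
  simp [s3, Matrix.det_fin_three]

lemma s2_expand (ℓ : ℕ) (c : ℤ → R6 ℓ) (i j : ℤ) : s2 ℓ c i j =
    c i * c j - c (i+1) * c (j-1) := by
  simp [s2, Matrix.det_fin_two]

noncomputable def DD (ℓ : ℕ) (m : ℤ) : R6 ℓ :=
  dV ℓ m - 2 * (va ℓ + vb ℓ) * dV ℓ (m - 1) + 4 * (va ℓ * vb ℓ) * dV ℓ (m - 2)

lemma dV_out (ℓ : ℕ) (m : ℤ) (hm : m < 0 ∨ (ℓ : ℤ) < m) : dV ℓ m = 0 := by
  unfold dV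
  rw [if_neg (by omega), dif_neg (by omega)]

lemma DD_hi (ℓ : ℕ) (m : ℤ) (hm : (ℓ : ℤ) + 2 < m) : DD ℓ m = 0 := by
  unfold DD
  rw [dV_out ℓ m (by omega), dV_out ℓ (m-1) (by omega), dV_out ℓ (m-2) (by omega)]
  ring

lemma DD_neg (ℓ : ℕ) (m : ℤ) (hm : m < 0) : DD ℓ m = 0 := by
  unfold DD
  rw [dV_out ℓ m (by omega), dV_out ℓ (m-1) (by omega), dV_out ℓ (m-2) (by omega)]
  ring

section Rec
variable {ℓ : ℕ} {c : ℤ → R6 ℓ}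

/-- the fundamental recursion hypothesis -/
def Rec (ℓ : ℕ) (c : ℤ → R6 ℓ) : Prop :=
  ∀ m : ℤ, c m = (va ℓ + vb ℓ) * c (m-1) - (va ℓ * vb ℓ) * c (m-2) + DD ℓ m

lemma crec_hi (hr : Rec ℓ c) (m : ℤ) (hm : (ℓ : ℤ) + 2 < m) :
    c m = (va ℓ + vb ℓ) * c (m-1) - (va ℓ * vb ℓ) * c (m-2) := by
  rw [hr m, DD_hi ℓ m hm, add_zero]

lemma s3_rec (hr : Rec ℓ c) (α β γ : ℤ) (hα : (ℓ : ℤ) + 2 < α) :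
    s3 ℓ c α β γ = (va ℓ + vb ℓ) * s3 ℓ c (α-1) β γ
      - (va ℓ * vb ℓ) * s3 ℓ c (α-2) β γ := by
  have h2 : c (α+2) = (va ℓ + vb ℓ) * c (α+1) - (va ℓ * vb ℓ) * c α := by
    have := crec_hi hr (α+2) (by omega)
    rwa [show α+2-1 = α+1 by ring, show α+2-2 = α by ring] at this
  have h1 : c (α+1) = (va ℓ + vb ℓ) * c α - (va ℓ * vb ℓ) * c (α-1) := by
    have := crec_hi hr (α+1) (by omega)
    rwa [show α+1-1 = α by ring, show α+1-2 = α-1 by ring] at this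
  have h0 : c α = (va ℓ + vb ℓ) * c (α-1) - (va ℓ * vb ℓ) * c (α-2) :=
    crec_hi hr α hα
  rw [s3_expand, s3_expand, s3_expand,
    show α-1+1 = α by ring, show α-1+2 = α+1 by ring,
    show α-2+1 = α-1 by ring, show α-2+2 = α by ring, h2, h1, h0]
  ring

lemma s3_row_eq (ℓ : ℕ) (c : ℤ → R6 ℓ) (β γ : ℤ) : s3 ℓ c (β-1) β γ = 0 := by
  rw [s3_expand, show β-1+1 = β by ring, show β-1+2 = β+1 by ring]
  ring

lemma hh_zero (ℓ : ℕ) : hh ℓ 0 = 1 := by simp [hh]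

lemma hh_one (ℓ : ℕ) : hh ℓ 1 = va ℓ + vb ℓ := by
  simp [hh, Finset.sum_range_succ]
  ring

lemma hh_succ_a (ℓ : ℕ) (n : ℕ) : hh ℓ (n+1) = va ℓ * hh ℓ n + vb ℓ ^ (n+1) := by
  unfold hh
  rw [Finset.sum_range_succ' (fun i => va ℓ ^ i * vb ℓ ^ (n + 1 - i)) (n+1)]
  simp only [Nat.succ_sub_succ, pow_zero, one_mul, Nat.sub_zero]
  rw [Finset.mul_sum]
  rw [Finset.sum_congr rfl (fun i _ => by rw [pow_succ]; ring :
    ∀ i ∈ Finset.range (n+1), va ℓ ^ (i+1) * vb ℓ ^ (n - i)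
      = va ℓ * (va ℓ ^ i * vb ℓ ^ (n - i)))]

lemma hh_succ_b (ℓ : ℕ) (n : ℕ) : hh ℓ (n+1) = vb ℓ * hh ℓ n + va ℓ ^ (n+1) := by
  unfold hh
  rw [Finset.sum_range_succ (fun i => va ℓ ^ i * vb ℓ ^ (n + 1 - i)) (n+1)]
  simp only [Nat.sub_self, pow_zero, mul_one]
  rw [Finset.mul_sum]
  congr 1
  refine Finset.sum_congr rfl (fun i hi => ?_)
  rw [Finset.mem_range] at hi
  rw [show n + 1 - i = (n - i) + 1 by omega, pow_succ]
  ring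

lemma hh_rec (ℓ : ℕ) (n : ℕ) :
    hh ℓ (n+2) = (va ℓ + vb ℓ) * hh ℓ (n+1) - (va ℓ * vb ℓ) * hh ℓ n := by
  have e1 := hh_succ_a ℓ (n+1)
  have e2 := hh_succ_a ℓ n
  have e3 := hh_succ_b ℓ n
  linear_combination e1 - vb ℓ * e3 + vb ℓ * e3 - vb ℓ * e2

lemma s3_shift (hr : Rec ℓ c) (m : ℕ) :
    ∀ β γ : ℤ, (ℓ : ℤ) + 2 ≤ β →
      s3 ℓ c (β + m) β γ = hh ℓ m * s3 ℓ c β β γ := by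
  induction m using Nat.twoStepInduction with
  | zero => intro β γ hβ; simp [hh_zero]
  | one =>
      intro β γ hβ
      have := s3_rec hr (β+1) β γ (by omega)
      rw [show β + (1:ℕ) = β + 1 by push_cast; ring, this,
        show β+1-1 = β by ring, show β+1-2 = β-1 by ring,
        s3_row_eq, hh_one]
      ring
  | more n ih1 ih2 =>
      intro β γ hβ
      have harith : β + ((n:ℤ)+2) = β + ((n+2 : ℕ) : ℤ) := by push_cast; ring
      have := s3_rec hr (β + ((n:ℤ)+2)) β γ (by omega)
      rw [show β + ((n:ℤ)+2)-1 = β + ((n+1 : ℕ) : ℤ) by push_cast; ring,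
        show β + ((n:ℤ)+2)-2 = β + ((n : ℕ) : ℤ) by ring] at this
      rw [← harith, this, ih2 β γ hβ, ih1 β γ hβ, hh_rec]
      ring

lemma s2_rec (hr : Rec ℓ c) (β : ℤ) (hβ : (ℓ : ℤ) + 2 < β) :
    s2 ℓ c β β = (va ℓ * vb ℓ) * s2 ℓ c (β-1) (β-1) := by
  have h1 : c (β+1) = (va ℓ + vb ℓ) * c β - (va ℓ * vb ℓ) * c (β-1) := by
    have := crec_hi hr (β+1) (by omega)
    rwa [show β+1-1 = β by ring, show β+1-2 = β-1 by ring] at this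
  have h0 : c β = (va ℓ + vb ℓ) * c (β-1) - (va ℓ * vb ℓ) * c (β-2) :=
    crec_hi hr β hβ
  rw [s2_expand, s2_expand, show β-1+1 = β by ring, show β-1-1 = β-2 by ring, h1, h0]
  ring

lemma s2_pow (hr : Rec ℓ c) (k : ℕ) :
    s2 ℓ c ((ℓ:ℤ)+2+k) ((ℓ:ℤ)+2+k)
      = (va ℓ * vb ℓ) ^ k * s2 ℓ c ((ℓ:ℤ)+2) ((ℓ:ℤ)+2) := by
  induction k with
  | zero => simp
  | succ n ih =>
      have := s2_rec hr ((ℓ:ℤ)+2+(n+1:ℕ)) (by push_cast; omega)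
      rw [show (ℓ:ℤ)+2+((n+1:ℕ):ℤ)-1 = (ℓ:ℤ)+2+(n:ℕ) by push_cast; ring] at this
      rw [this, ih, pow_succ]
      ring

lemma s3_col (hr : Rec ℓ c) (β γ : ℤ) (hβ : (ℓ : ℤ) + 2 ≤ β) :
    s3 ℓ c β β γ = s2 ℓ c β β * DD ℓ γ := by
  have h2 : c (β+2) = (va ℓ + vb ℓ) * c (β+1) - (va ℓ * vb ℓ) * c β := by
    have := crec_hi hr (β+2) (by omega)
    rwa [show β+2-1 = β+1 by ring, show β+2-2 = β by ring] at this
  have h1 : c (β+1) = (va ℓ + vb ℓ) * c β - (va ℓ * vb ℓ) * c (β-1) := by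
    have := crec_hi hr (β+1) (by omega)
    rwa [show β+1-1 = β by ring, show β+1-2 = β-1 by ring] at this
  have hγ := hr γ
  rw [s3_expand, s2_expand, h2, h1, hγ]
  ring

end Rec

theorem I22_factorization (ℓ : ℕ) (c : ℤ → R6 ℓ)
    (hcneg : ∀ n : ℤ, n < 0 → c n = 0)
    (hc : (1 - PowerSeries.C (R := R6 ℓ) (va ℓ) * PowerSeries.X) *
          (1 - PowerSeries.C (R := R6 ℓ) (vb ℓ) * PowerSeries.X) *
          PowerSeries.mk (fun n : ℕ => c n)
        = (1 - PowerSeries.C (R := R6 ℓ) (2 * va ℓ) * PowerSeries.X) *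
          (1 - PowerSeries.C (R := R6 ℓ) (2 * vb ℓ) * PowerSeries.X) *
          ∑ i ∈ Finset.range (ℓ + 1),
            PowerSeries.C (R := R6 ℓ) (dV ℓ i) * PowerSeries.X ^ i) :
    ∀ α β γ : ℤ, β ≤ α → γ ≤ β → (ℓ : ℤ) + 2 ≤ β → γ ≤ (ℓ : ℤ) →
      s3 ℓ c α β γ
        = (va ℓ * vb ℓ) ^ (β - ℓ - 2).toNat * hh ℓ (α - β).toNat *
            s2 ℓ c ((ℓ : ℤ) + 2) ((ℓ : ℤ) + 2) *
            (dV ℓ γ - 2 * (va ℓ + vb ℓ) * dV ℓ (γ - 1)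
              + 4 * (va ℓ * vb ℓ) * dV ℓ (γ - 2)) := by
  -- extract the coefficient recursion from the power series identity
  set F : PowerSeries (R6 ℓ) := PowerSeries.mk (fun n : ℕ => c n) with hF
  set S : PowerSeries (R6 ℓ) :=
    ∑ i ∈ Finset.range (ℓ + 1), PowerSeries.C (R := R6 ℓ) (dV ℓ i) * PowerSeries.X ^ i with hS
  have hXF : ∀ n : ℕ, PowerSeries.coeff (R := R6 ℓ) n (PowerSeries.X * F) = c ((n:ℤ)-1) := by
    intro n
    cases n with
    | zero => simp [hF, hcneg (-1) (by norm_num)]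
    | succ k => simp [hF, coeff_succ_X_mul]
  have hXXF : ∀ n : ℕ, PowerSeries.coeff (R := R6 ℓ) n
      (PowerSeries.X * (PowerSeries.X * F)) = c ((n:ℤ)-2) := by
    intro n
    cases n with
    | zero => simp [coeff_zero_X_mul, hcneg (-2) (by norm_num)]
    | succ k =>
        rw [coeff_succ_X_mul, hXF k]
        congr 1; push_cast; ring
  have hcS : ∀ n : ℕ, PowerSeries.coeff (R := R6 ℓ) n S = dV ℓ n := by
    intro n
    rw [hS]
    simp only [map_sum, PowerSeries.coeff_C_mul, PowerSeries.coeff_X_pow]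
    rw [Finset.sum_eq_single n]
    · simp
    · intro i hi hne; simp [Ne.symm hne]
    · intro h
      simp only [Finset.mem_range, not_lt] at h
      rw [dV_out ℓ n (by omega)]
      simp
  have hXS : ∀ n : ℕ, PowerSeries.coeff (R := R6 ℓ) n (PowerSeries.X * S) = dV ℓ ((n:ℤ)-1) := by
    intro n
    cases n with
    | zero => simp [coeff_zero_X_mul, dV_out ℓ (-1) (by norm_num)]
    | succ k => rw [coeff_succ_X_mul, hcS k]; congr 1; push_cast; ring
  have hXXS : ∀ n : ℕ, PowerSeries.coeff (R := R6 ℓ) n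
      (PowerSeries.X * (PowerSeries.X * S)) = dV ℓ ((n:ℤ)-2) := by
    intro n
    cases n with
    | zero => simp [coeff_zero_X_mul, dV_out ℓ (-2) (by norm_num)]
    | succ k => rw [coeff_succ_X_mul, hXS k]; congr 1; push_cast; ring
  have key : ∀ n : ℕ,
      c n - (va ℓ + vb ℓ) * c ((n:ℤ)-1) + (va ℓ * vb ℓ) * c ((n:ℤ)-2)
        = dV ℓ n - 2*(va ℓ + vb ℓ) * dV ℓ ((n:ℤ)-1)
          + 4*(va ℓ * vb ℓ) * dV ℓ ((n:ℤ)-2) := by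
    intro n
    have h := congrArg (PowerSeries.coeff (R := R6 ℓ) n) hc
    rw [show (1 - PowerSeries.C (R := R6 ℓ) (va ℓ) * PowerSeries.X) *
          (1 - PowerSeries.C (R := R6 ℓ) (vb ℓ) * PowerSeries.X) * F
        = F - PowerSeries.C (R := R6 ℓ) (va ℓ) * (PowerSeries.X * F)
            - PowerSeries.C (R := R6 ℓ) (vb ℓ) * (PowerSeries.X * F)
            + PowerSeries.C (R := R6 ℓ) (va ℓ) * (PowerSeries.C (R := R6 ℓ) (vb ℓ) *
                (PowerSeries.X * (PowerSeries.X * F))) from by ring,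
       show (1 - PowerSeries.C (R := R6 ℓ) (2 * va ℓ) * PowerSeries.X) *
          (1 - PowerSeries.C (R := R6 ℓ) (2 * vb ℓ) * PowerSeries.X) * S
        = S - PowerSeries.C (R := R6 ℓ) (2 * va ℓ) * (PowerSeries.X * S)
            - PowerSeries.C (R := R6 ℓ) (2 * vb ℓ) * (PowerSeries.X * S)
            + PowerSeries.C (R := R6 ℓ) (2 * va ℓ) * (PowerSeries.C (R := R6 ℓ) (2 * vb ℓ) *
                (PowerSeries.X * (PowerSeries.X * S))) from by ring] at h
    simp only [map_sub, map_add, PowerSeries.coeff_C_mul, hXF, hXXF, hXS, hXXS, hcS] at h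
    simp only [hF, PowerSeries.coeff_mk] at h
    linear_combination h
  have hr : Rec ℓ c := by
    intro m
    rcases lt_or_ge m 0 with h | h
    · rw [hcneg m h, hcneg _ (by omega : m-1 < 0), hcneg _ (by omega : m-2 < 0),
        DD_neg ℓ m h]
      ring
    · lift m to ℕ using h
      have := key m
      unfold DD
      linear_combination this
  intro α β γ hβα hγβ hβ hγ
  obtain ⟨m, hm⟩ : ∃ m : ℕ, α = β + m := ⟨(α - β).toNat, by omega⟩
  obtain ⟨k, hk⟩ : ∃ k : ℕ, β = (ℓ:ℤ) + 2 + k := ⟨(β - ℓ - 2).toNat, by omega⟩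
  have hmt : (α - β).toNat = m := by omega
  have hkt : (β - ℓ - 2).toNat = k := by omega
  rw [hmt, hkt, hm, s3_shift hr m β γ hβ, s3_col hr β γ hβ, hk, s2_pow hr k]
  unfold DD
  ring
end

section
/- Let α, b_1, ..., b_ℓ be indeterminates and define c_k (1 ≤ k ≤ ℓ+1) by ∑_k c_k t^k + 1 = ((1+2αt)·∏_{i=1}^ℓ(1+β_i t))/(1+αt), where b_i is the i-th elementary symmetric polynomial of β_1,...,β_ℓ. Then c_{ℓ+1} = α·∏_{i=1}^ℓ(β_i - α). -/
open PowerSeries Finset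

/-- The ring `ℚ[α, β_1, …, β_ℓ]`. -/
abbrev R8 (ℓ : ℕ) := MvPolynomial (Option (Fin ℓ)) ℚ

noncomputable def al (ℓ : ℕ) : R8 ℓ := MvPolynomial.X none
noncomputable def be (ℓ : ℕ) (i : Fin ℓ) : R8 ℓ := MvPolynomial.X (some i)

section Aux
variable {A : Type*} [CommRing A]

lemma coeff_succ_linmul (b : A) (f : PowerSeries A) (n : ℕ) :
    (PowerSeries.coeff (R := A) (n+1)) ((1 + PowerSeries.C (R := A) b * PowerSeries.X) * f)
      = (PowerSeries.coeff (R := A) (n+1)) f + b * (PowerSeries.coeff (R := A) n) f := by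
  have : (1 + PowerSeries.C (R := A) b * PowerSeries.X) * f
      = f + PowerSeries.C (R := A) b * (PowerSeries.X * f) := by ring
  rw [this, map_add, PowerSeries.coeff_C_mul, PowerSeries.coeff_succ_X_mul]

lemma inv_lin (a : A) :
    (1 + PowerSeries.C (R := A) a * PowerSeries.X) * PowerSeries.mk (fun n => (-a)^n) = 1 := by
  ext n
  cases n with
  | zero => simp
  | succ m =>
    rw [coeff_succ_linmul]
    simp [pow_succ]
    ring

lemma coeff_list_prod_zero (L : List A) (k : ℕ) (hk : L.length < k) :
    (PowerSeries.coeff (R := A) k) (L.map (fun b => 1 + PowerSeries.C (R := A) b * PowerSeries.X)).prod = 0 := by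
  induction L generalizing k with
  | nil =>
    obtain ⟨m, rfl⟩ := Nat.exists_eq_add_of_lt hk
    simp
  | cons b L ih =>
    obtain ⟨m, rfl⟩ := Nat.exists_eq_add_of_lt hk
    simp only [List.map_cons, List.prod_cons]
    rw [coeff_succ_linmul, ih _ (by simp at hk ⊢; omega),
      ih _ (by simp at hk ⊢; omega)]
    ring

lemma main_coeff (a : A) (L : List A) :
    (PowerSeries.coeff (R := A) (L.length + 1))
      ((1 + PowerSeries.C (R := A) (2*a) * PowerSeries.X) *
        (L.map (fun b => 1 + PowerSeries.C (R := A) b * PowerSeries.X)).prod *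
        PowerSeries.mk (fun n => (-a)^n))
      = a * (L.map (fun b => b - a)).prod := by
  induction L with
  | nil =>
    simp only [List.length_nil, List.map_nil, List.prod_nil, mul_one]
    rw [coeff_succ_linmul]
    simp
    ring
  | cons b L ih =>
    simp only [List.map_cons, List.prod_cons, List.length_cons]
    have key : ((1 + PowerSeries.C (R := A) (2*a) * PowerSeries.X) *
        ((1 + PowerSeries.C (R := A) b * PowerSeries.X) *
          (L.map (fun x => 1 + PowerSeries.C (R := A) x * PowerSeries.X)).prod)) *
        PowerSeries.mk (fun n => (-a : A)^n)
        = (1 + PowerSeries.C (R := A) (2*a) * PowerSeries.X) *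
            (L.map (fun x => 1 + PowerSeries.C (R := A) x * PowerSeries.X)).prod
          + PowerSeries.C (R := A) (b - a) * (PowerSeries.X *
            ((1 + PowerSeries.C (R := A) (2*a) * PowerSeries.X) *
              (L.map (fun x => 1 + PowerSeries.C (R := A) x * PowerSeries.X)).prod *
              PowerSeries.mk (fun n => (-a : A)^n))) := by
      have h1 := inv_lin a
      calc ((1 + PowerSeries.C (R := A) (2*a) * PowerSeries.X) *
        ((1 + PowerSeries.C (R := A) b * PowerSeries.X) *
          (L.map (fun x => 1 + PowerSeries.C (R := A) x * PowerSeries.X)).prod)) *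
        PowerSeries.mk (fun n => (-a : A)^n)
          = ((1 + PowerSeries.C (R := A) (2*a) * PowerSeries.X) *
              (L.map (fun x => 1 + PowerSeries.C (R := A) x * PowerSeries.X)).prod) *
              (((1 + PowerSeries.C (R := A) a * PowerSeries.X) *
                PowerSeries.mk (fun n => (-a : A)^n)))
            + PowerSeries.C (R := A) (b - a) * (PowerSeries.X *
              ((1 + PowerSeries.C (R := A) (2*a) * PowerSeries.X) *
                (L.map (fun x => 1 + PowerSeries.C (R := A) x * PowerSeries.X)).prod *
                PowerSeries.mk (fun n => (-a : A)^n))) := by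
            rw [map_sub]; ring
        _ = _ := by rw [h1, mul_one]
    rw [key, map_add, PowerSeries.coeff_C_mul, PowerSeries.coeff_succ_X_mul, ih]
    have h0 : (PowerSeries.coeff (R := A) (L.length + 1 + 1))
        ((1 + PowerSeries.C (R := A) (2*a) * PowerSeries.X) *
          (L.map (fun x => 1 + PowerSeries.C (R := A) x * PowerSeries.X)).prod) = 0 := by
      have := coeff_list_prod_zero ((2*a) :: L) (L.length + 1 + 1) (by simp)
      simpa [mul_comm] using this
    rw [h0]
    ring

end Aux

theorem A1_top_chern_class (ℓ : ℕ) (c : ℕ → R8 ℓ) (hc0 : c 0 = 1)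
    (hc : PowerSeries.mk c * (1 + PowerSeries.C (R := R8 ℓ) (al ℓ) * PowerSeries.X)
        = (1 + PowerSeries.C (R := R8 ℓ) (2 * al ℓ) * PowerSeries.X) *
          ∏ i : Fin ℓ, (1 + PowerSeries.C (R := R8 ℓ) (be ℓ i) * PowerSeries.X)) :
    c (ℓ + 1) = al ℓ * ∏ i : Fin ℓ, (be ℓ i - al ℓ) := by
  set a := al ℓ
  set S := PowerSeries.mk (fun n => (-a)^n) with hS
  have h1 : (1 + PowerSeries.C (R := R8 ℓ) a * PowerSeries.X) * S = 1 := inv_lin a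
  have h2 : PowerSeries.mk c
      = ((1 + PowerSeries.C (R := R8 ℓ) (2 * a) * PowerSeries.X) *
          ∏ i : Fin ℓ, (1 + PowerSeries.C (R := R8 ℓ) (be ℓ i) * PowerSeries.X)) * S := by
    rw [← hc, mul_assoc, h1, mul_one]
  set L := (List.finRange ℓ).map (be ℓ) with hL
  have hLlen : L.length = ℓ := by simp [hL]
  have hprod : (∏ i : Fin ℓ, (1 + PowerSeries.C (R := R8 ℓ) (be ℓ i) * PowerSeries.X))
      = (L.map (fun b => 1 + PowerSeries.C (R := R8 ℓ) b * PowerSeries.X)).prod := by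
    rw [Fin.prod_univ_def, hL, List.map_map]
    rfl
  have hprod2 : (∏ i : Fin ℓ, (be ℓ i - a)) = (L.map (fun b => b - a)).prod := by
    rw [Fin.prod_univ_def, hL, List.map_map]
    rfl
  have := main_coeff a L
  rw [hLlen] at this
  calc c (ℓ + 1) = (PowerSeries.coeff (R := R8 ℓ) (ℓ + 1)) (PowerSeries.mk c) := by
        rw [PowerSeries.coeff_mk]
    _ = a * ∏ i : Fin ℓ, (be ℓ i - a) := by
        rw [h2, hprod, this, hprod2]
end
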